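/- Let G be a finite non-abelian DC p-group with an abelian maximal subgroup. Then d(G') ≤ p − 1. -/

import Mathlib

/-- A group is a `DC`-group if the set of derived subgroups of its subgroups
is a chain under inclusion. -/
def IsDCGroup (G : Type*) [Group G] : Prop :=
  ∀ H K : Subgroup G, ⁅H, H⁆ ≤ ⁅K, K⁆ ∨ ⁅K, K⁆ ≤ ⁅H, H⁆

open scoped commutatorElement

private lemma commute_of_mem_closure {G : Type*} [Group G] {S : Set G}
    (h : ∀ s ∈ S, ∀ t ∈ S, Commute s t) :
    ∀ x ∈ Subgroup.closure S, ∀ y ∈ Subgroup.closure S, Commute x y := by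
  intro x hx y hy
  induction hx, hy using Subgroup.closure_induction₂ with
  | mem x y hx hy => exact h x hx y hy
  | one_left x hx => exact Commute.one_left x
  | one_right x hx => exact Commute.one_right x
  | mul_left x y z _ _ _ h1 h2 => exact h1.mul_left h2
  | mul_right y z x _ _ _ h1 h2 => exact h1.mul_right h2
  | inv_left x y _ _ h1 => exact h1.inv_left
  | inv_right x y _ _ h1 => exact h1.inv_right

/-- If all commutators of pairs of elements of `S` lie in a normal subgroup `N`,
then the derived subgroup of `closure S` lies in `N`. -/
private lemma commutator_closure_le {G : Type*} [Group G] (S : Set G) (N : Subgroup G)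
    [hN : N.Normal] (h : ∀ s ∈ S, ∀ t ∈ S, ⁅s, t⁆ ∈ N) :
    ⁅Subgroup.closure S, Subgroup.closure S⁆ ≤ N := by
  rw [Subgroup.commutator_le]
  intro g₁ hg₁ g₂ hg₂
  rw [← QuotientGroup.ker_mk' N, MonoidHom.mem_ker, map_commutatorElement,
    commutatorElement_eq_one_iff_commute]
  have hmap : ∀ g ∈ Subgroup.closure S,
      (QuotientGroup.mk' N) g ∈ Subgroup.closure ((QuotientGroup.mk' N) '' S) := by
    intro g hg
    rw [← MonoidHom.map_closure]
    exact Subgroup.mem_map_of_mem _ hg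
  refine commute_of_mem_closure ?_ _ (hmap g₁ hg₁) _ (hmap g₂ hg₂)
  rintro _ ⟨s, hs, rfl⟩ _ ⟨t, ht, rfl⟩
  rw [← commutatorElement_eq_one_iff_commute, ← map_commutatorElement,
    ← MonoidHom.mem_ker, QuotientGroup.ker_mk']
  exact h s hs t ht

theorem dc_abelian_max_rank (p : ℕ) [Fact p.Prime] (G : Type*) [Group G] [Finite G]
    (hG : IsPGroup p G) (hdc : IsDCGroup G)
    (hna : ¬ ∀ a b : G, a * b = b * a)
    (hmax : ∃ M : Subgroup G, IsCoatom M ∧ ∀ a ∈ M, ∀ b ∈ M, a * b = b * a) :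
    Group.rank ↥(commutator G) ≤ p - 1 := by
  classical
  obtain ⟨M, hM, habel⟩ := hmax
  have hp : p.Prime := Fact.out
  have hppos : 0 < p := hp.pos
  -- an element outside `M`
  obtain ⟨b, hb⟩ : ∃ b : G, b ∉ M := by
    by_contra h
    push_neg at h
    exact hM.1 ((Subgroup.eq_top_iff' M).mpr h)
  -- `M` is normal
  haveI : Group.IsNilpotent G := hG.isNilpotent
  haveI hMnormal : M.Normal :=
    Subgroup.NormalizerCondition.normal_of_coatom M (normalizerCondition_of_isNilpotent (G := G)) hM
  -- every subgroup of `G ⧸ M` is `⊥` or `⊤`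
  have hQsub : ∀ K : Subgroup (G ⧸ M), K = ⊥ ∨ K = ⊤ := by
    intro K
    have h1 : M ≤ Subgroup.comap (QuotientGroup.mk' M) K := by
      intro m hm
      have : (QuotientGroup.mk' M) m = 1 := by
        rw [← MonoidHom.mem_ker, QuotientGroup.ker_mk']; exact hm
      rw [Subgroup.mem_comap, this]
      exact K.one_mem
    have hKmap : K = Subgroup.map (QuotientGroup.mk' M) (Subgroup.comap (QuotientGroup.mk' M) K) :=
      (Subgroup.map_comap_eq_self_of_surjective (QuotientGroup.mk'_surjective M) K).symm
    rcases eq_or_lt_of_le h1 with h | h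
    · left
      rw [hKmap, ← h]
      rw [Subgroup.map_eq_bot_iff, QuotientGroup.ker_mk']
    · right
      rw [hKmap, hM.2 _ h]
      exact Subgroup.map_top_of_surjective _ (QuotientGroup.mk'_surjective M)
  haveI : Finite (G ⧸ M) := Quotient.finite _
  have hQ : IsPGroup p (G ⧸ M) := hG.to_quotient M
  haveI hQnt : Nontrivial (G ⧸ M) := by
    refine ⟨⟨((b : G) : G ⧸ M), 1, ?_⟩⟩
    simpa [QuotientGroup.eq_one_iff] using hb
  -- `G ⧸ M` is abelian
  have hQcomm : ∀ x y : G ⧸ M, Commute x y := by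
    have hcenter : Subgroup.center (G ⧸ M) = ⊤ := by
      rcases hQsub (Subgroup.center (G ⧸ M)) with h | h
      · exfalso
        have hnt : Nontrivial (Subgroup.center (G ⧸ M)) := hQ.center_nontrivial
        rw [h] at hnt
        exact (not_nontrivial _) hnt
      · exact h
    intro x y
    exact (Subgroup.mem_center_iff.mp (hcenter ▸ Subgroup.mem_top x) y).symm
  have hcomm_le : commutator G ≤ M := by
    rw [commutator_def, Subgroup.commutator_le]
    intro g₁ _ g₂ _
    rw [← QuotientGroup.ker_mk' M, MonoidHom.mem_ker, map_commutatorElement,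
      commutatorElement_eq_one_iff_commute]
    exact hQcomm _ _
  -- `b ^ p ∈ M`
  have hbp : b ^ p ∈ M := by
    by_contra hbp
    set q : G ⧸ M := ((b : G) : G ⧸ M) with hq_def
    have hqp : q ^ p ≠ 1 := by
      intro h1
      apply hbp
      rw [← QuotientGroup.eq_one_iff (b ^ p), QuotientGroup.mk_pow]
      exact h1
    rcases hQsub (Subgroup.zpowers (q ^ p)) with h | h
    · apply hqp
      have hmem0 := Subgroup.mem_zpowers (q ^ p)
      rw [h] at hmem0
      simpa using hmem0
    · -- order contradiction
      have hq1 : q ≠ 1 := fun h1 => hqp (by rw [h1, one_pow])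
      obtain ⟨k, hk⟩ := (IsPGroup.iff_orderOf.mp hQ) q
      have hk1 : 1 ≤ k := by
        rcases Nat.eq_zero_or_pos k with rfl | h0
        · rw [pow_zero] at hk
          exact absurd (orderOf_eq_one_iff.mp hk) hq1
        · exact h0
      have hdvd : orderOf q ∣ Nat.card (Subgroup.zpowers (q ^ p)) :=
        Subgroup.orderOf_dvd_natCard _ (h ▸ Subgroup.mem_top q)
      rw [Nat.card_zpowers] at hdvd
      have horder : orderOf (q ^ p) = p ^ (k - 1) := by
        rw [orderOf_pow, hk, Nat.gcd_eq_right (dvd_pow_self p (by omega)),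
          ← pow_sub_one_mul (by omega : k ≠ 0) p, Nat.mul_div_cancel _ hp.pos]
      rw [horder, hk] at hdvd
      have := Nat.le_of_dvd (pow_pos hp.pos _) hdvd
      exact absurd this (by
        have : p ^ (k - 1) < p ^ k := Nat.pow_lt_pow_right hp.one_lt (by omega)
        omega)
  -- the maximal derived subgroup among two-generated subgroups ⟨a, b⟩, a ∈ M
  set f : G → Subgroup G := fun a => ⁅Subgroup.closure {a, b}, Subgroup.closure {a, b}⁆ with hf
  have hfin : (f '' (M : Set G)).Finite := ((M : Set G).toFinite).image f
  have hne : (f '' (M : Set G)).Nonempty := ⟨f 1, 1, M.one_mem, rfl⟩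
  obtain ⟨D, hD, hDmax⟩ := Set.Finite.exists_maximalFor id _ hfin hne
  obtain ⟨a0, ha0M, ha0⟩ := hD
  have hDtop : ∀ a ∈ M, f a ≤ D := by
    intro a haM
    rcases hdc (Subgroup.closure {a, b}) (Subgroup.closure {a0, b}) with h | h
    · exact ha0 ▸ h
    · have hle : D ≤ f a := ha0 ▸ h
      exact hDmax ⟨a, haM, rfl⟩ hle
  -- the conjugates of ⁅a0, b⁆
  set c : ℕ → G := fun i => b ^ i * ⁅a0, b⁆ * (b ^ i)⁻¹ with hc
  have hc0 : c 0 = ⁅a0, b⁆ := by simp [hc]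
  have hc_comm : ∀ i, c i ∈ commutator G := by
    intro i
    exact (Subgroup.commutator_normal ⊤ ⊤).conj_mem _
      (Subgroup.commutator_mem_commutator (Subgroup.mem_top _) (Subgroup.mem_top _)) _
  have hcM : ∀ i, c i ∈ M := fun i => hcomm_le (hc_comm i)
  have hc_succ : ∀ i, c (i + 1) = b * c i * b⁻¹ := by
    intro i
    simp only [hc]
    group
  have hcp : c p = c 0 := by
    have hcomm : b ^ p * ⁅a0, b⁆ = ⁅a0, b⁆ * b ^ p := habel _ hbp _ (hc0 ▸ hcM 0)
    simp only [hc, pow_zero, one_mul, inv_one, mul_one]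
    rw [hcomm, mul_assoc, mul_inv_cancel, mul_one]
  set Sp : Set G := c '' Set.Iio p with hSp
  set P : Subgroup G := Subgroup.closure Sp with hP
  have hgen_mem : ∀ i < p, c i ∈ P := fun i hi => Subgroup.subset_closure ⟨i, hi, rfl⟩
  have hPle : P ≤ commutator G := by
    rw [hP, Subgroup.closure_le]
    rintro _ ⟨i, _, rfl⟩
    exact hc_comm i
  -- conjugation stabilizes the generating set
  have hconj_b : ∀ x ∈ Sp, b * x * b⁻¹ ∈ Sp := by
    rintro _ ⟨i, hi, rfl⟩
    rw [← hc_succ i]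
    have hi' : i < p := hi
    rcases lt_or_eq_of_le (Nat.succ_le_of_lt hi') with h | h
    · exact ⟨i + 1, h, rfl⟩
    · rw [(show i + 1 = p by omega), hcp]; exact ⟨0, hppos, rfl⟩
  have hconj_binv : ∀ x ∈ Sp, b⁻¹ * x * b ∈ Sp := by
    rintro _ ⟨i, hi, rfl⟩
    have hi' : i < p := hi
    rcases Nat.eq_zero_or_pos i with rfl | h0
    · obtain ⟨j, hj⟩ : ∃ j, p = j + 1 := ⟨p - 1, by omega⟩
      have heq : b⁻¹ * c 0 * b = c j := by
        rw [← hcp, hj, hc_succ j]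
        group
      rw [heq]
      exact ⟨j, Set.mem_Iio.mpr (by omega), rfl⟩
    · obtain ⟨j, hj⟩ : ∃ j, i = j + 1 := ⟨i - 1, by omega⟩
      have heq : b⁻¹ * c i * b = c j := by
        rw [hj, hc_succ j]
        group
      rw [heq]
      exact ⟨j, Set.mem_Iio.mpr (by omega), rfl⟩
  have hconj_closure : ∀ g : G, (∀ x ∈ Sp, g * x * g⁻¹ ∈ Sp) → ∀ h ∈ P, g * h * g⁻¹ ∈ P := by
    intro g hg h hh
    induction hh using Subgroup.closure_induction with
    | mem x hx => exact Subgroup.subset_closure (hg x hx)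
    | one => simpa using P.one_mem
    | mul x y _ _ ihx ihy =>
        have : g * (x * y) * g⁻¹ = (g * x * g⁻¹) * (g * y * g⁻¹) := by group
        rw [this]; exact mul_mem ihx ihy
    | inv x _ ih =>
        have : g * x⁻¹ * g⁻¹ = (g * x * g⁻¹)⁻¹ := by group
        rw [this]; exact inv_mem ih
  have hnorm_of : ∀ g : G, (∀ x ∈ Sp, g * x * g⁻¹ ∈ Sp) → (∀ x ∈ Sp, g⁻¹ * x * g ∈ Sp) →
      g ∈ Subgroup.normalizer (P : Set G) := by
    intro g h1 h2
    rw [Subgroup.mem_normalizer_iff]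
    intro h
    constructor
    · exact fun hh => hconj_closure g h1 h hh
    · intro hh
      have := hconj_closure g⁻¹ (by simpa using h2) _ hh
      simpa [mul_assoc] using this
  -- ⊤ is generated by M and b
  have htop : Subgroup.closure ((M : Set G) ∪ {b}) = ⊤ := by
    rw [Subgroup.closure_union, Subgroup.closure_eq]
    refine hM.2 _ (lt_of_le_of_ne le_sup_left ?_)
    intro h
    have hb' : b ∈ M ⊔ Subgroup.closure {b} :=
      (le_sup_right : Subgroup.closure {b} ≤ M ⊔ Subgroup.closure {b})
        (Subgroup.subset_closure (Set.mem_singleton b))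
    rw [← h] at hb'
    exact hb hb'
  haveI hPnormal : P.Normal := by
    rw [← Subgroup.normalizer_eq_top_iff, eq_top_iff, ← htop, Subgroup.closure_le]
    rintro g (hgM | rfl)
    · refine hnorm_of g ?_ ?_
      · rintro _ ⟨i, hi, rfl⟩
        have heq : g * c i * g⁻¹ = c i := by
          rw [habel g hgM _ (hcM i), mul_assoc, mul_inv_cancel, mul_one]
        rw [heq]
        exact ⟨i, hi, rfl⟩
      · rintro _ ⟨i, hi, rfl⟩
        have heq : g⁻¹ * c i * g = c i := by
          rw [mul_assoc, ← habel g hgM _ (hcM i), ← mul_assoc, inv_mul_cancel, one_mul]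
        rw [heq]
        exact ⟨i, hi, rfl⟩
    · exact hnorm_of _ hconj_b hconj_binv
  -- D ≤ P
  have hDP : D ≤ P := by
    rw [← ha0, hf]
    apply commutator_closure_le
    intro s hs t ht
    rcases hs with rfl | hs
    · rcases ht with rfl | ht
      · simp only [commutatorElement_self]; exact P.one_mem
      · rw [Set.mem_singleton_iff] at ht; subst ht
        exact hc0 ▸ hgen_mem 0 hp.pos
    · rw [Set.mem_singleton_iff] at hs; subst hs
      rcases ht with rfl | ht
      · rw [← commutatorElement_inv]
        exact inv_mem (hc0 ▸ hgen_mem 0 hp.pos)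
      · rw [Set.mem_singleton_iff] at ht; subst ht
        simp only [commutatorElement_self]; exact P.one_mem
  -- commutator G ≤ P
  have hcommP : commutator G ≤ P := by
    rw [commutator_def, ← htop]
    apply commutator_closure_le
    intro s hs t ht
    rcases hs with hsM | rfl
    · rcases ht with htM | rfl
      · rw [commutatorElement_eq_one_iff_commute.mpr (habel s hsM t htM)]
        exact P.one_mem
      · exact hDP (hDtop s hsM (Subgroup.commutator_mem_commutator
          (Subgroup.subset_closure (Set.mem_insert s _))
          (Subgroup.subset_closure (Set.mem_insert_of_mem _ rfl))))
    · rcases ht with htM | rfl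
      · rw [← commutatorElement_inv]
        exact inv_mem (hDP (hDtop t htM (Subgroup.commutator_mem_commutator
          (Subgroup.subset_closure (Set.mem_insert t _))
          (Subgroup.subset_closure (Set.mem_insert_of_mem _ rfl)))))
      · simp only [commutatorElement_self]; exact P.one_mem
  have hPcomm : P = commutator G := le_antisymm hPle hcommP
  -- the relation eliminating the last generator
  have hrel : ∀ k : ℕ, ⁅a0, b ^ (k + 1)⁆ = ⁅a0, b ^ k⁆ * c k := by
    intro k
    simp only [hc, commutatorElement_def, pow_succ]
    group
  have hmem : ∀ k, ⁅a0, b ^ k⁆ ∈ Subgroup.closure (c '' Set.Iio k) := by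
    intro k
    induction k with
    | zero =>
        have h0 : ⁅a0, b ^ 0⁆ = 1 := by rw [pow_zero]; simp [commutatorElement_def]
        rw [h0]; exact Subgroup.one_mem _
    | succ n ih =>
        rw [hrel n]
        refine mul_mem (Subgroup.closure_mono (Set.image_mono ?_) ih)
          (Subgroup.subset_closure ⟨n, Nat.lt_succ_self n, rfl⟩)
        intro x hx
        exact lt_trans hx (Nat.lt_succ_self n)
  have hlast : c (p - 1) ∈ Subgroup.closure (c '' Set.Iio (p - 1)) := by
    have h1 : ⁅a0, b ^ p⁆ = 1 :=
      commutatorElement_eq_one_iff_commute.mpr (habel a0 ha0M _ hbp)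
    have h2 := hrel (p - 1)
    rw [(by omega : p - 1 + 1 = p), h1] at h2
    have h3 : c (p - 1) = ⁅a0, b ^ (p - 1)⁆⁻¹ := by
      rw [inv_eq_of_mul_eq_one_right h2.symm]
    rw [h3]
    exact inv_mem (hmem (p - 1))
  -- commutator G is generated by p - 1 elements
  have hP' : commutator G = Subgroup.closure (c '' Set.Iio (p - 1)) := by
    apply le_antisymm
    · rw [← hPcomm, hP, Subgroup.closure_le]
      rintro _ ⟨i, hi, rfl⟩
      have hi' : i < p := hi
      rcases lt_or_ge i (p - 1) with h | h
      · exact Subgroup.subset_closure ⟨i, h, rfl⟩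
      · have : i = p - 1 := by omega
        subst this
        exact hlast
    · rw [Subgroup.closure_le]
      rintro _ ⟨i, _, rfl⟩
      exact hc_comm i
  -- rank bound
  have hcoe : ((Finset.image c (Finset.range (p - 1)) : Finset G) : Set G) = c '' Set.Iio (p - 1) := by
    rw [Finset.coe_image, Finset.coe_range]
  have hfinal : commutator G =
      Subgroup.closure ((Finset.image c (Finset.range (p - 1)) : Finset G) : Set G) := by
    rw [hP', hcoe]
  calc Group.rank ↥(commutator G)
      = Group.rank ↥(Subgroup.closure
          ((Finset.image c (Finset.range (p - 1)) : Finset G) : Set G)) :=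
        Subgroup.rank_congr hfinal
    _ ≤ (Finset.image c (Finset.range (p - 1))).card :=
        Subgroup.rank_closure_finset_le_card _
    _ ≤ p - 1 := le_trans Finset.card_image_le (by simp)
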